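/- arXiv:2303.02496 — 2 statements merged into one kernel-verified Lean document; each statement's English description precedes it below -/
import Mathlib

section
/- Let s ∈ (0,1), α ∈ (0,s), r > 0, and let ν ∈ ℝⁿ be a unit vector. For each integer l ≥ 0 and y ∈ ℝⁿ, ∫_{B_{2^{-l} r}(y) \ B_{2^{-l-1} r}(y)} 1_{{|(x-y)·ν| ≤ 2 r 2^{-l(1+α)}}} |x-y|^{-(n+s)} dx ≤ C r^{-s} 2^{l(s-α)}, where C depends only on n, s. -/
set_option maxHeartbeats 1000000
open Real MeasureTheory ENNReal

lemma dyadic_arith {s α r : ℝ} (hs1 : s < 1) (hr : 0 < r)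
    (L : ℝ) (k : ℕ) :
    ((2:ℝ) ^ (-L-1) * r) ^ (-(((k:ℝ)+1) + s)) *
      (2 * (2 * r * (2:ℝ) ^ (-L*(1+α))) * (2 * ((2:ℝ) ^ (-L) * r)) ^ k)
    ≤ (2:ℝ) ^ (2*k+4) * r ^ (-s) * (2:ℝ) ^ (L*(s-α)) := by
  rw [← Real.log_le_log_iff (by positivity) (by positivity)]
  simp (disch := positivity) only [Real.log_mul, Real.log_rpow, Real.log_pow]
  have hlog : 0 < Real.log 2 := Real.log_pos (by norm_num)
  push_cast
  nlinarith [mul_pos (sub_pos.mpr hs1) hlog]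

lemma euclidean_abs_coord_le_norm {n : ℕ} (z : EuclideanSpace ℝ (Fin n)) (i : Fin n) :
    |z i| ≤ ‖z‖ := by
  rw [EuclideanSpace.norm_eq]
  calc |z i| = Real.sqrt (‖z i‖ ^ 2) := by
        rw [Real.sqrt_sq_eq_abs]; simp
    _ ≤ _ := Real.sqrt_le_sqrt (Finset.single_le_sum
        (f := fun j => ‖z j‖ ^ 2) (fun j _ => sq_nonneg _) (Finset.mem_univ i))

/-- Dyadic annulus estimate: the integral of `|x-y|^{-(n+s)}` over the annulus
`B_{2^{-l}r}(y) \ B_{2^{-l-1}r}(y)` intersected with the slab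
`{|(x-y)·ν| ≤ 2r·2^{-l(1+α)}}` is at most `C r^{-s} 2^{l(s-α)}`, `C = C(n,s)`. -/
theorem dyadic_annulus_estimate (n : ℕ) (s : ℝ) (hs : s ∈ Set.Ioo (0:ℝ) 1) :
    ∃ C : ℝ, 0 < C ∧
      ∀ (α r : ℝ), α ∈ Set.Ioo 0 s → 0 < r →
      ∀ ν : EuclideanSpace ℝ (Fin n), ‖ν‖ = 1 →
      ∀ (l : ℕ) (y : EuclideanSpace ℝ (Fin n)),
        (∫⁻ x in (Metric.ball y ((2:ℝ) ^ (-(l:ℝ)) * r) \ Metric.ball y ((2:ℝ) ^ (-(l:ℝ)-1) * r))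
            ∩ {x : EuclideanSpace ℝ (Fin n) | |inner ℝ (x - y) ν| ≤ 2 * r * (2:ℝ) ^ (-(l:ℝ)*(1+α))},
          ENNReal.ofReal (‖x - y‖ ^ (-((n : ℝ) + s))))
        ≤ ENNReal.ofReal (C * r ^ (-s) * (2:ℝ) ^ ((l:ℝ)*(s-α))) := by
  obtain ⟨hs0, hs1⟩ := hs
  rcases Nat.eq_zero_or_pos n with hn | hn
  · subst hn
    refine ⟨1, one_pos, ?_⟩
    rintro α r ⟨hα0, hαs⟩ hr ν hν l y
    exfalso
    have : ν = 0 := Subsingleton.elim ν 0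
    rw [this, norm_zero] at hν
    norm_num at hν
  obtain ⟨k, rfl⟩ := Nat.exists_eq_succ_of_ne_zero hn.ne'
  refine ⟨(2:ℝ) ^ (2*(k+1)+2), by positivity, ?_⟩
  rintro α r ⟨hα0, hαs⟩ hr ν hν l y
  set L : ℝ := (l : ℝ) with hL
  set R : ℝ := (2:ℝ) ^ (-L) * r with hR
  set R' : ℝ := (2:ℝ) ^ (-L-1) * r with hR'
  set δ : ℝ := 2 * r * (2:ℝ) ^ (-L*(1+α)) with hδ
  have hRpos : 0 < R := by positivity
  have hR'pos : 0 < R' := by positivity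
  have hδpos : 0 < δ := by positivity
  set S : Set (EuclideanSpace ℝ (Fin (k+1))) := (Metric.ball y R \ Metric.ball y R')
      ∩ {x : EuclideanSpace ℝ (Fin (k+1)) | |inner ℝ (x - y) ν| ≤ δ} with hS
  -- the slab/annulus is measurable
  have hSmeas : MeasurableSet S := by
    refine (measurableSet_ball.diff measurableSet_ball).inter ?_
    exact (isClosed_le (Continuous.abs (Continuous.inner
      (continuous_id.sub continuous_const) continuous_const)) continuous_const).measurableSet
  -- pointwise bound for the integrand on S
  set M : ℝ := R' ^ (-(((k:ℝ)+1) + s)) with hM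
  have hbound : ∀ x ∈ S, ENNReal.ofReal (‖x - y‖ ^ (-(((k+1 : ℕ) : ℝ) + s))) ≤ ENNReal.ofReal M := by
    intro x hx
    have hx' : R' ≤ ‖x - y‖ := by
      have := hx.1.2
      rw [Metric.mem_ball, dist_eq_norm] at this
      linarith [not_lt.mp this]
    refine ENNReal.ofReal_le_ofReal ?_
    have : ‖x - y‖ ^ (-(((k+1 : ℕ) : ℝ) + s)) ≤ R' ^ (-(((k+1 : ℕ) : ℝ) + s)) :=
      Real.rpow_le_rpow_of_nonpos hR'pos hx' (neg_nonpos.mpr (by positivity))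
    rw [hM]
    convert this using 3
    push_cast; ring
  -- orthonormal basis with b 0 = ν
  have hcard : Module.finrank ℝ (EuclideanSpace ℝ (Fin (k+1))) = Fintype.card (Fin (k+1)) := by
    simp [finrank_euclideanSpace]
  have hon : Orthonormal ℝ (Set.restrict ({0} : Set (Fin (k+1))) (fun _ => ν)) := by
    constructor
    · intro i
      exact hν
    · intro i j hij
      exfalso
      exact hij (Subsingleton.elim i j)
  obtain ⟨b, hb⟩ := hon.exists_orthonormalBasis_extension_of_card_eq hcard
  have hb0 : b 0 = ν := hb 0 rfl
  -- the box
  set g : Fin (k+1) → ℝ := fun i => if i = 0 then δ else R with hg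
  set Box : Set (EuclideanSpace ℝ (Fin (k+1))) :=
    (MeasurableEquiv.toLp 2 (Fin (k+1) → ℝ)).symm ⁻¹' Set.univ.pi (fun i => Set.Icc (-(g i)) (g i)) with hBox
  have hBoxmeas : MeasurableSet Box := (MeasurableEquiv.toLp 2 (Fin (k+1) → ℝ)).symm.measurable (MeasurableSet.univ_pi fun i => measurableSet_Icc)
  have hmp : MeasurePreserving (fun x : EuclideanSpace ℝ (Fin (k+1)) => b.repr (x - y)) volume volume :=
    b.measurePreserving_repr.comp (measurePreserving_sub_right volume y)
  have hsub : S ⊆ (fun x : EuclideanSpace ℝ (Fin (k+1)) => b.repr (x - y)) ⁻¹' Box := by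
    intro x hx
    intro i _
    change b.repr (x - y) i ∈ Set.Icc _ _
    rcases eq_or_ne i 0 with hi | hi
    · subst hi
      have : b.repr (x - y) 0 = inner ℝ (x - y) ν := by
        rw [b.repr_apply_apply, hb0, real_inner_comm]
      rw [Set.mem_Icc, hg]
      simp only [if_pos rfl]
      rw [this]
      exact abs_le.mp hx.2
    · have h1 : |b.repr (x - y) i| ≤ ‖x - y‖ := by
        calc |b.repr (x - y) i| ≤ ‖b.repr (x - y)‖ := euclidean_abs_coord_le_norm _ _
        _ = ‖x - y‖ := by rw [LinearIsometryEquiv.norm_map]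
      have h2 : ‖x - y‖ ≤ R := by
        have := hx.1.1
        rw [Metric.mem_ball, dist_eq_norm] at this
        linarith
      rw [Set.mem_Icc, hg]
      simp only [if_neg hi]
      constructor
      · linarith [(abs_le.mp (h1.trans h2)).1]
      · linarith [(abs_le.mp (h1.trans h2)).2]
  -- volume of the box
  have hvolBox : volume Box = ENNReal.ofReal (2*δ) * ENNReal.ofReal (2*R) ^ k := by
    have h1 : Box = (MeasurableEquiv.toLp 2 (Fin (k+1) → ℝ)).symm ⁻¹'
        (Set.univ.pi (fun i => Set.Icc (-(g i)) (g i))) := rfl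
    rw [h1, (EuclideanSpace.volume_preserving_symm_measurableEquiv_toLp (Fin (k+1))).measure_preimage
      (MeasurableSet.univ_pi fun i => measurableSet_Icc).nullMeasurableSet,
      volume_pi_pi]
    simp only [Real.volume_Icc, sub_neg_eq_add]
    rw [← Finset.mul_prod_erase Finset.univ _ (Finset.mem_univ (0 : Fin (k+1)))]
    rw [hg]
    simp only [if_pos rfl]
    rw [Finset.prod_congr rfl (fun i hi => by
      rw [if_neg (Finset.ne_of_mem_erase hi)]), Finset.prod_const,
      Finset.card_erase_of_mem (Finset.mem_univ _), Finset.card_univ, Fintype.card_fin]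
    norm_num [two_mul]
  have hvolS : volume S ≤ ENNReal.ofReal (2*δ) * ENNReal.ofReal (2*R) ^ k := by
    rw [← hvolBox, ← hmp.measure_preimage hBoxmeas.nullMeasurableSet]
    exact measure_mono hsub
  -- putting it together
  refine le_trans (setLIntegral_mono (f := fun x => ENNReal.ofReal (‖x - y‖ ^ (-(((k+1:ℕ) : ℝ) + s)))) measurable_const hbound) ?_
  rw [setLIntegral_const]
  refine le_trans (mul_le_mul_right hvolS _) ?_
  rw [← ENNReal.ofReal_pow (by positivity), ← ENNReal.ofReal_mul (by positivity),
    ← ENNReal.ofReal_mul (by positivity)]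
  refine ENNReal.ofReal_le_ofReal ?_
  have harith := dyadic_arith (α := α) hs1 hr L k
  have he : 2*(k+1)+2 = 2*k+4 := by ring
  rw [he]
  calc M * (2*δ * (2*R) ^ k) = R' ^ (-(((k:ℝ)+1) + s)) *
      (2 * (2 * r * (2:ℝ) ^ (-L*(1+α))) * (2 * ((2:ℝ) ^ (-L) * r)) ^ k) := by
        rw [hM, hδ, hR]; try ring
  _ ≤ _ := harith
end

section
/- Let P ⊂ ℝⁿ be the subgraph P = { (x', xⁿ) : xⁿ < ψ(x') } of a C² function ψ : ℝ^{n-1} → ℝ with ψ(0) = 0, ∇ψ(0) = 0, and ‖D²ψ‖ ≤ a. Let K : ℝⁿ × ℝⁿ → [0,∞) be symmetric about the origin in the sense K(z) = K(-z), with K(z) ≤ Λ|z|^{-(n+s)} for s ∈ (0,1). Then for δ ∈ (0,1], | ∫_{B_δ(0)} (χ_P(x) - χ_{𝒞P}(x)) K(x) dx | ≤ C a δ^{1-s} (with the integral understood as a principal value / limit over B_δ \ B_ε), where C depends only on n, s, Λ. -/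
open Real MeasureTheory Filter
open scoped ENNReal

section Aux

open Metric

instance volume_prod_negInv (m : ℕ) :
    (volume : Measure (EuclideanSpace ℝ (Fin m) × ℝ)).IsNegInvariant := by
  constructor
  show Measure.map Neg.neg _ = _
  have h : (Neg.neg : EuclideanSpace ℝ (Fin m) × ℝ → _) = Prod.map Neg.neg Neg.neg := rfl
  rw [h, Measure.volume_eq_prod, ← Measure.map_prod_map _ _ measurable_neg measurable_neg,
    Measure.map_neg_eq_self, Measure.map_neg_eq_self]

lemma taylor_bound {m : ℕ} {ψ : EuclideanSpace ℝ (Fin m) → ℝ} {a : ℝ}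
    (hψ : ContDiff ℝ 2 ψ) (h0 : ψ 0 = 0) (hg : gradient ψ 0 = 0)
    (hD2 : ∀ x, ‖iteratedFDeriv ℝ 2 ψ x‖ ≤ a) : ∀ y, |ψ y| ≤ a * ‖y‖ ^ 2 := by
  intro y
  have ha : 0 ≤ a := le_trans (norm_nonneg _) (hD2 0)
  have hd1 : Differentiable ℝ ψ := hψ.differentiable two_ne_zero
  have hdg : Differentiable ℝ (fderiv ℝ ψ) :=
    (hψ.fderiv_right (m := 1) le_rfl).differentiable one_ne_zero
  have hB : ∀ z, ‖fderiv ℝ (fderiv ℝ ψ) z‖ ≤ a := by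
    intro z
    refine ContinuousLinearMap.opNorm_le_bound _ ha fun u => ?_
    refine ContinuousLinearMap.opNorm_le_bound _ (by positivity) fun v => ?_
    have h2 := (iteratedFDeriv ℝ 2 ψ z).le_opNorm ![u, v]
    rw [iteratedFDeriv_two_apply ψ z ![u, v]] at h2
    simp only [Matrix.cons_val_zero, Matrix.cons_val_one, Matrix.head_cons] at h2
    calc ‖fderiv ℝ (fderiv ℝ ψ) z u v‖ ≤ ‖iteratedFDeriv ℝ 2 ψ z‖ * (‖u‖ * ‖v‖) := by
          simpa [Fin.prod_univ_two] using h2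
      _ ≤ a * ‖u‖ * ‖v‖ := by
          rw [mul_assoc]; gcongr; exact hD2 z
  have hf0 : fderiv ℝ ψ 0 = 0 := by
    have : gradient ψ 0 = (InnerProductSpace.toDual ℝ _).symm (fderiv ℝ ψ 0) := rfl
    rw [this] at hg
    simpa using (LinearIsometryEquiv.map_eq_zero_iff _).mp hg
  have hg1 : ∀ z, ‖fderiv ℝ ψ z‖ ≤ a * ‖z‖ := by
    intro z
    have := convex_univ.norm_image_sub_le_of_norm_fderiv_le
      (fun x _ => hdg x) (fun x _ => hB x) (Set.mem_univ 0) (Set.mem_univ z)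
    simpa [hf0] using this
  have := (convex_closedBall (0 : EuclideanSpace ℝ (Fin m)) ‖y‖).norm_image_sub_le_of_norm_fderiv_le
    (fun x _ => hd1 x) (fun x hx => le_trans (hg1 x)
      (mul_le_mul_of_nonneg_left (by simpa using mem_closedBall_zero_iff.mp hx) ha))
    (mem_closedBall_self (norm_nonneg y)) (mem_closedBall_zero_iff.mpr le_rfl)
  calc |ψ y| = ‖ψ y - ψ 0‖ := by rw [h0]; simp [Real.norm_eq_abs]
    _ ≤ a * ‖y‖ * ‖y - 0‖ := this
    _ = a * ‖y‖ ^ 2 := by rw [sub_zero]; ring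

lemma dyadic_bound (m : ℕ) (q δ : ℝ) (hm : -(m:ℝ) < q) (hq : q < 0) (hδ : 0 < δ) :
    ∫⁻ x : EuclideanSpace ℝ (Fin m),
      {y : EuclideanSpace ℝ (Fin m) | ‖y‖ < δ}.indicator
        (fun y => ENNReal.ofReal (‖y‖ ^ q)) x
    ≤ ENNReal.ofReal (δ ^ ((m:ℝ) + q)) * ENNReal.ofReal ((2:ℝ) ^ (-q)) *
        (1 - ENNReal.ofReal ((2:ℝ) ^ (-((m:ℝ) + q))))⁻¹ *
        volume (ball (0 : EuclideanSpace ℝ (Fin m)) 1) := by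
  classical
  have hmpos : 0 < m := by
    rcases Nat.eq_zero_or_pos m with h | h
    · exfalso; rw [h] at hm; push_cast at hm; linarith
    · exact h
  haveI : Nontrivial (EuclideanSpace ℝ (Fin m)) := by
    obtain ⟨k, rfl⟩ := Nat.exists_eq_succ_of_ne_zero hmpos.ne'
    infer_instance
  set E := EuclideanSpace ℝ (Fin m)
  have h2 : (0:ℝ) < 2 := two_pos
  set r : ℕ → ℝ := fun j => δ * (1/2:ℝ) ^ j with hr
  have hr2 : ∀ k : ℕ, r k = δ * (2:ℝ) ^ (-(k:ℝ)) := by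
    intro k
    simp only [hr]
    congr 1
    rw [Real.rpow_neg h2.le, Real.rpow_natCast, one_div, inv_pow]
  have hrpos : ∀ j, 0 < r j := fun j => mul_pos hδ (by positivity)
  set S : ℕ → Set E := fun j => {y : E | r (j+1) ≤ ‖y‖ ∧ ‖y‖ < r j} with hS
  have hSmeas : ∀ j, MeasurableSet (S j) := by
    intro j
    exact (measurableSet_le measurable_const measurable_norm).inter
      (measurableSet_lt measurable_norm measurable_const)
  have hpt : ∀ x : E, {y : E | ‖y‖ < δ}.indicator (fun y => ENNReal.ofReal (‖y‖ ^ q)) x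
      ≤ ∑' j, (S j).indicator (fun _ => ENNReal.ofReal (r (j+1) ^ q)) x := by
    intro x
    by_cases hxδ : ‖x‖ < δ
    · rw [Set.indicator_of_mem (show x ∈ {y : E | ‖y‖ < δ} from hxδ)]
      by_cases hx0 : x = 0
      · simp [hx0, Real.zero_rpow hq.ne]
      · have hxpos : 0 < ‖x‖ := norm_pos_iff.mpr hx0
        have hex : ∃ n : ℕ, r (n+1) ≤ ‖x‖ := by
          obtain ⟨n, hn⟩ := exists_pow_lt_of_lt_one (div_pos hxpos hδ) (by norm_num : (1/2:ℝ) < 1)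
          refine ⟨n, ?_⟩
          have hn' : δ * (1/2:ℝ)^n < ‖x‖ := by
            rw [mul_comm]
            exact (lt_div_iff₀ hδ).mp hn
          have hmono : δ * ((1:ℝ)/2) ^ (n+1) ≤ δ * (1/2)^n := by
            apply mul_le_mul_of_nonneg_left _ hδ.le
            apply pow_le_pow_of_le_one (by norm_num) (by norm_num); omega
          exact le_trans hmono hn'.le
        set j := Nat.find hex with hj
        have hub : ‖x‖ < r j := by
          rcases Nat.eq_zero_or_pos j with h0 | hpos
          · rw [h0]
            simpa [hr] using hxδ
          · obtain ⟨k, hk⟩ := Nat.exists_eq_succ_of_ne_zero hpos.ne'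
            have hmin := Nat.find_min hex (m := k) (by omega)
            rw [hk]
            exact lt_of_not_ge (by simpa [← hj, hk] using hmin)
        have hlb : r (j+1) ≤ ‖x‖ := Nat.find_spec hex
        have hmemS : x ∈ S j := ⟨hlb, hub⟩
        calc ENNReal.ofReal (‖x‖ ^ q)
            ≤ ENNReal.ofReal (r (j+1) ^ q) := by
              apply ENNReal.ofReal_le_ofReal
              exact Real.rpow_le_rpow_of_nonpos (hrpos _) hlb hq.le
          _ = (S j).indicator (fun _ => ENNReal.ofReal (r (j+1) ^ q)) x := by
              rw [Set.indicator_of_mem hmemS]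
          _ ≤ _ := ENNReal.le_tsum j
    · rw [Set.indicator_of_notMem (show x ∉ {y : E | ‖y‖ < δ} from hxδ)]
      exact zero_le
  have key : ∀ j : ℕ, r (j+1) ^ q * r j ^ m
      = δ ^ ((m:ℝ) + q) * (2:ℝ) ^ (-q) * ((2:ℝ) ^ (-((m:ℝ) + q))) ^ j := by
    intro j
    rw [hr2 (j+1), hr2 j]
    rw [← Real.rpow_natCast (δ * 2 ^ (-(j:ℝ))) m,
      ← Real.rpow_natCast ((2:ℝ) ^ (-((m:ℝ)+q))) j,
      Real.mul_rpow hδ.le (Real.rpow_pos_of_pos h2 _).le,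
      Real.mul_rpow hδ.le (Real.rpow_pos_of_pos h2 _).le,
      ← Real.rpow_mul h2.le, ← Real.rpow_mul h2.le, ← Real.rpow_mul h2.le,
      mul_mul_mul_comm, ← Real.rpow_add hδ, ← Real.rpow_add h2,
      mul_assoc (δ ^ ((m:ℝ)+q)), ← Real.rpow_add h2]
    push_cast
    ring_nf
  calc ∫⁻ x : E, {y : E | ‖y‖ < δ}.indicator (fun y => ENNReal.ofReal (‖y‖ ^ q)) x
      ≤ ∫⁻ x : E, ∑' j, (S j).indicator (fun _ => ENNReal.ofReal (r (j+1) ^ q)) x :=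
        lintegral_mono hpt
    _ = ∑' j, ∫⁻ x : E, (S j).indicator (fun _ => ENNReal.ofReal (r (j+1) ^ q)) x := by
        rw [lintegral_tsum]
        intro j
        exact ((measurable_const).indicator (hSmeas j)).aemeasurable
    _ ≤ ∑' j, ENNReal.ofReal (δ ^ ((m:ℝ) + q)) * ENNReal.ofReal ((2:ℝ) ^ (-q)) *
          (ENNReal.ofReal ((2:ℝ) ^ (-((m:ℝ) + q)))) ^ j * volume (ball (0 : E) 1) := by
        apply ENNReal.tsum_le_tsum
        intro j
        rw [lintegral_indicator_const (hSmeas j)]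
        have hsub : S j ⊆ ball (0 : E) (r j) := fun y hy => mem_ball_zero_iff.mpr hy.2
        have hvol : volume (S j) ≤ ENNReal.ofReal (r j ^ m) * volume (ball (0 : E) 1) := by
          calc volume (S j) ≤ volume (ball (0 : E) (r j)) := measure_mono hsub
            _ = ENNReal.ofReal (r j ^ m) * volume (ball (0 : E) 1) := by
                rw [Measure.addHaar_ball volume (0 : E) (hrpos j).le,
                  finrank_euclideanSpace_fin]
        calc ENNReal.ofReal (r (j+1) ^ q) * volume (S j)
            ≤ ENNReal.ofReal (r (j+1) ^ q) * (ENNReal.ofReal (r j ^ m) * volume (ball (0:E) 1)) := by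
              gcongr
          _ = ENNReal.ofReal (r (j+1) ^ q * r j ^ m) * volume (ball (0:E) 1) := by
              rw [ENNReal.ofReal_mul (Real.rpow_nonneg (hrpos _).le q), mul_assoc]
          _ = _ := by
              rw [key j, ENNReal.ofReal_mul (by positivity), ENNReal.ofReal_mul (by positivity),
                ENNReal.ofReal_pow (by positivity)]
    _ = _ := by
        simp_rw [mul_assoc, ENNReal.tsum_mul_left, ENNReal.tsum_mul_right,
          ENNReal.tsum_geometric]

/-- The geometric constant appearing in the estimate. -/
noncomputable def Gconst (m : ℕ) (s : ℝ) : ℝ≥0∞ :=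
  ENNReal.ofReal ((2:ℝ) ^ (-(1 - (m:ℝ) - s))) * (1 - ENNReal.ofReal ((2:ℝ) ^ (-(1 - s))))⁻¹ *
    volume (Metric.ball (0 : EuclideanSpace ℝ (Fin m)) 1)

lemma Gconst_ne_top (m : ℕ) {s : ℝ} (hs1 : s < 1) : Gconst m s ≠ ⊤ := by
  have hw : ENNReal.ofReal ((2:ℝ) ^ (-(1 - s))) < 1 := by
    rw [show (1:ℝ≥0∞) = ENNReal.ofReal 1 by simp]
    apply (ENNReal.ofReal_lt_ofReal_iff one_pos).mpr
    exact Real.rpow_lt_one_of_one_lt_of_neg one_lt_two (by linarith)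
  apply ENNReal.mul_ne_top
  apply ENNReal.mul_ne_top ENNReal.ofReal_ne_top
  · rw [ENNReal.inv_ne_top]
    exact (tsub_pos_of_lt hw).ne'
  · exact measure_ball_lt_top.ne

end Aux

/-- Cancellation estimate for a parabola-like subgraph: if `P = {xⁿ < ψ(x')}` with
`ψ(0)=0`, `∇ψ(0)=0`, `‖D²ψ‖ ≤ a`, and `K` is symmetric (`K(z)=K(-z)`) with
`K(z) ≤ Λ|z|^{-(n+s)}` (`n = m+1` the ambient dimension), then the principal value
`∫_{B_δ} (χ_P - χ_{𝒞P}) K` is bounded in absolute value by `C a δ^{1-s}`,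
with `C = C(n,s,Λ)`. -/
theorem subgraph_cancellation (m : ℕ) (s Λ : ℝ) (hs : s ∈ Set.Ioo (0:ℝ) 1) (hΛ : 0 < Λ) :
    ∃ C : ℝ, 0 < C ∧
      ∀ (ψ : EuclideanSpace ℝ (Fin m) → ℝ) (a : ℝ), 0 < a →
        ContDiff ℝ 2 ψ → ψ 0 = 0 → gradient ψ 0 = 0 →
        (∀ x', ‖iteratedFDeriv ℝ 2 ψ x'‖ ≤ a) →
      ∀ K : EuclideanSpace ℝ (Fin m) × ℝ → ℝ,
        (∀ z, 0 ≤ K z) → (∀ z, K z = K (-z)) →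
        (∀ z, K z ≤ Λ * (Real.sqrt (‖z.1‖ ^ 2 + z.2 ^ 2)) ^ (-(((m : ℝ) + 1) + s))) →
      ∀ δ : ℝ, δ ∈ Set.Ioc (0:ℝ) 1 →
      ∀ I : ℝ,
        Tendsto (fun ε : ℝ =>
          ∫ x in {z : EuclideanSpace ℝ (Fin m) × ℝ |
              ε ≤ Real.sqrt (‖z.1‖ ^ 2 + z.2 ^ 2) ∧ Real.sqrt (‖z.1‖ ^ 2 + z.2 ^ 2) < δ},
            (({z : EuclideanSpace ℝ (Fin m) × ℝ | z.2 < ψ z.1}.indicator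
                (fun _ => (1:ℝ)) x) -
             ({z : EuclideanSpace ℝ (Fin m) × ℝ | z.2 < ψ z.1}ᶜ.indicator
                (fun _ => (1:ℝ)) x)) * K x)
          (nhdsWithin 0 (Set.Ioi 0)) (nhds I) →
        |I| ≤ C * a * δ ^ (1 - s) := by
  obtain ⟨hs0, hs1⟩ := hs
  refine ⟨Λ * (2 * (Gconst m s).toReal + 1), by positivity, ?_⟩
  intro ψ a ha hψ hψ0 hgrad hD2 K hK0 hKsym hKbd δ hδ I hI
  obtain ⟨hδ0, hδ1⟩ := hδ
  have hTay : ∀ y, |ψ y| ≤ a * ‖y‖ ^ 2 := taylor_bound hψ hψ0 hgrad hD2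
  set Gt : ℝ := (Gconst m s).toReal with hGt
  have hGt0 : 0 ≤ Gt := ENNReal.toReal_nonneg
  set B : ℝ := 2 * Λ * Gt * a * δ ^ (1 - s) with hB
  have hB0 : 0 ≤ B := by rw [hB]; positivity
  have hν : ∀ z : EuclideanSpace ℝ (Fin m) × ℝ,
      ‖z.1‖ ≤ Real.sqrt (‖z.1‖ ^ 2 + z.2 ^ 2) := by
    intro z
    have h := Real.sqrt_le_sqrt (show ‖z.1‖ ^ 2 ≤ ‖z.1‖ ^ 2 + z.2 ^ 2 by nlinarith [sq_nonneg z.2])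
    rwa [Real.sqrt_sq (norm_nonneg z.1)] at h
  have hp2 : (-(((m : ℝ) + 1) + s)) + 2 = 1 - (m:ℝ) - s := by ring
  have hpneg : (-(((m : ℝ) + 1) + s)) < 0 := by
    have : (0:ℝ) ≤ m := Nat.cast_nonneg m
    linarith
  have hp2ne : (1 : ℝ) - (m:ℝ) - s ≠ 0 := by
    rcases Nat.eq_zero_or_pos m with h | h
    · rw [h]; push_cast; intro hc; linarith
    · have h1 : (1:ℝ) ≤ m := by exact_mod_cast h
      intro hc; linarith
  have hkey : ∀ ε ∈ Set.Ioi (0:ℝ),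
      |∫ x in {z : EuclideanSpace ℝ (Fin m) × ℝ |
          ε ≤ Real.sqrt (‖z.1‖ ^ 2 + z.2 ^ 2) ∧ Real.sqrt (‖z.1‖ ^ 2 + z.2 ^ 2) < δ},
        (({z : EuclideanSpace ℝ (Fin m) × ℝ | z.2 < ψ z.1}.indicator
            (fun _ => (1:ℝ)) x) -
         ({z : EuclideanSpace ℝ (Fin m) × ℝ | z.2 < ψ z.1}ᶜ.indicator
            (fun _ => (1:ℝ)) x)) * K x| ≤ B := by
    intro ε hε
    set P : Set (EuclideanSpace ℝ (Fin m) × ℝ) := {z | z.2 < ψ z.1} with hP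
    set A : Set (EuclideanSpace ℝ (Fin m) × ℝ) :=
      {z | ε ≤ Real.sqrt (‖z.1‖ ^ 2 + z.2 ^ 2) ∧ Real.sqrt (‖z.1‖ ^ 2 + z.2 ^ 2) < δ} with hA
    set f : EuclideanSpace ℝ (Fin m) × ℝ → ℝ :=
      fun x => (P.indicator (fun _ => (1:ℝ)) x - Pᶜ.indicator (fun _ => (1:ℝ)) x) * K x with hf
    show |∫ x in A, f x| ≤ B
    have hcont : Continuous (fun z : EuclideanSpace ℝ (Fin m) × ℝ =>
        Real.sqrt (‖z.1‖ ^ 2 + z.2 ^ 2)) :=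
      Real.continuous_sqrt.comp ((continuous_fst.norm.pow 2).add (continuous_snd.pow 2))
    have hAmeas : MeasurableSet A :=
      (measurableSet_le measurable_const hcont.measurable).inter
        (measurableSet_lt hcont.measurable measurable_const)
    have hAneg : ∀ z : EuclideanSpace ℝ (Fin m) × ℝ, -z ∈ A ↔ z ∈ A := by
      intro z
      have hsq : Real.sqrt (‖(-z).1‖ ^ 2 + (-z).2 ^ 2)
          = Real.sqrt (‖z.1‖ ^ 2 + z.2 ^ 2) := by
        simp [Prod.fst_neg, Prod.snd_neg, norm_neg, neg_sq]
      constructor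
      · intro hz; exact ⟨by rw [← hsq]; exact hz.1, by rw [← hsq]; exact hz.2⟩
      · intro hz; exact ⟨by rw [hsq]; exact hz.1, by rw [hsq]; exact hz.2⟩
    by_cases hInt : IntegrableOn f A volume
    case neg =>
      rw [integral_undef hInt]
      simpa using hB0
    case pos =>
    -- integrability of the reflected function and symmetry of the integral
    have hgInt : Integrable (A.indicator f) volume := (integrable_indicator_iff hAmeas).mpr hInt
    have hmap : (volume : Measure (EuclideanSpace ℝ (Fin m) × ℝ)).map Neg.neg = volume :=
      Measure.map_neg_eq_self _
    have hgnegInt : Integrable (fun x => A.indicator f (-x)) volume := by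
      have h := (measurableEmbedding_neg.integrable_map_iff (g := A.indicator f) :
        Integrable (A.indicator f)
          ((volume : Measure (EuclideanSpace ℝ (Fin m) × ℝ)).map Neg.neg) ↔ _)
      rw [hmap] at h
      exact h.mp hgInt
    have hindneg : (fun x => A.indicator f (-x)) = A.indicator (fun x => f (-x)) := by
      funext x
      by_cases hx : x ∈ A
      · rw [Set.indicator_of_mem ((hAneg x).mpr hx), Set.indicator_of_mem hx]
      · rw [Set.indicator_of_notMem (fun h => hx ((hAneg x).mp h)),
          Set.indicator_of_notMem hx]
    have hIntN : IntegrableOn (fun x => f (-x)) A volume :=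
      (integrable_indicator_iff hAmeas).mp (hindneg ▸ hgnegInt)
    have heq : ∫ x in A, f (-x) = ∫ x in A, f x := by
      rw [← integral_indicator hAmeas, ← integral_indicator hAmeas, ← hindneg,
        integral_neg_eq_self (A.indicator f) volume]
    have h2 : ∫ x in A, (f x + f (-x)) = 2 * ∫ x in A, f x := by
      rw [integral_add hInt hIntN, heq]; ring
    have habs : |∫ x in A, f x| = (1/2) * |∫ x in A, (f x + f (-x))| := by
      rw [h2, abs_mul, abs_two]; ring
    have hbound1 : |∫ x in A, (f x + f (-x))|
        ≤ (∫⁻ x in A, ENNReal.ofReal ‖f x + f (-x)‖ ∂volume).toReal := by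
      simpa [Real.norm_eq_abs] using
        norm_integral_le_lintegral_norm (μ := volume.restrict A) (fun x => f x + f (-x))
    -- the majorant
    set Bad : Set (EuclideanSpace ℝ (Fin m) × ℝ) :=
      {x | |x.2| ≤ a * ‖x.1‖ ^ 2 ∧ ‖x.1‖ < δ} with hBad
    have hBadmeas : MeasurableSet Bad :=
      (measurableSet_le (continuous_snd.abs.measurable)
        ((continuous_const.mul (continuous_fst.norm.pow 2)).measurable)).inter
        (measurableSet_lt continuous_fst.norm.measurable measurable_const)
    set H : EuclideanSpace ℝ (Fin m) × ℝ → ℝ≥0∞ :=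
      Bad.indicator (fun x => 2 * ENNReal.ofReal Λ
        * ENNReal.ofReal ‖x.1‖ ^ (-(((m : ℝ) + 1) + s))) with hH
    have hHinner : Measurable (fun x : EuclideanSpace ℝ (Fin m) × ℝ =>
        2 * ENNReal.ofReal Λ * ENNReal.ofReal ‖x.1‖ ^ (-(((m : ℝ) + 1) + s))) := by
      fun_prop
    have hHmeas : Measurable H := hHinner.indicator hBadmeas
    -- pointwise bound
    have hpt : ∀ x ∈ A, ENNReal.ofReal ‖f x + f (-x)‖ ≤ H x := by
      intro x hx
      obtain ⟨hx1, hx2⟩ := hx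
      have hx1δ : ‖x.1‖ < δ := lt_of_le_of_lt (hν x) hx2
      have hsum : f x + f (-x) = 0 ∨
          (‖f x + f (-x)‖ = 2 * K x ∧ |x.2| ≤ a * ‖x.1‖ ^ 2) := by
        have hT1 := abs_le.mp (hTay x.1)
        have hT2 := abs_le.mp (hTay (-x.1))
        rw [norm_neg] at hT2
        by_cases hxP : x ∈ P <;> by_cases hxQ : -x ∈ P
        · right
          have hfx : f x = K x := by
            rw [hf]
            simp [Set.indicator_of_mem hxP,
              Set.indicator_of_notMem (Set.notMem_compl_iff.mpr hxP)]
          have hfx' : f (-x) = K x := by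
            rw [hf]
            simp [Set.indicator_of_mem hxQ,
              Set.indicator_of_notMem (Set.notMem_compl_iff.mpr hxQ), ← hKsym x]
          refine ⟨?_, ?_⟩
          · rw [hfx, hfx', Real.norm_eq_abs, abs_of_nonneg (by linarith [hK0 x])]
            ring
          · have h1 : x.2 < ψ x.1 := hxP
            have h2' : -x.2 < ψ (-x.1) := by
              have := hxQ
              simpa [hP, Set.mem_setOf_eq, Prod.fst_neg, Prod.snd_neg] using this
            exact abs_le.mpr ⟨by linarith, by linarith⟩
        · left
          have hfx : f x = K x := by
            rw [hf]
            simp [Set.indicator_of_mem hxP,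
              Set.indicator_of_notMem (Set.notMem_compl_iff.mpr hxP)]
          have hfx' : f (-x) = -K x := by
            rw [hf]
            simp [Set.indicator_of_notMem hxQ, Set.indicator_of_mem (Set.mem_compl hxQ),
              ← hKsym x]
          rw [hfx, hfx']; ring
        · left
          have hfx : f x = -K x := by
            rw [hf]
            simp [Set.indicator_of_notMem hxP, Set.indicator_of_mem (Set.mem_compl hxP)]
          have hfx' : f (-x) = K x := by
            rw [hf]
            simp [Set.indicator_of_mem hxQ,
              Set.indicator_of_notMem (Set.notMem_compl_iff.mpr hxQ), ← hKsym x]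
          rw [hfx, hfx']; ring
        · right
          have hfx : f x = -K x := by
            rw [hf]
            simp [Set.indicator_of_notMem hxP, Set.indicator_of_mem (Set.mem_compl hxP)]
          have hfx' : f (-x) = -K x := by
            rw [hf]
            simp [Set.indicator_of_notMem hxQ, Set.indicator_of_mem (Set.mem_compl hxQ),
              ← hKsym x]
          refine ⟨?_, ?_⟩
          · rw [hfx, hfx', Real.norm_eq_abs, show -K x + -K x = -(2 * K x) by ring, abs_neg,
              abs_of_nonneg (by linarith [hK0 x])]
          · have h1 : ψ x.1 ≤ x.2 := by
              have := hxP
              simp only [hP, Set.mem_setOf_eq, not_lt] at this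
              exact this
            have h2' : ψ (-x.1) ≤ -x.2 := by
              have := hxQ
              simp only [hP, Set.mem_setOf_eq, not_lt, Prod.fst_neg, Prod.snd_neg] at this
              exact this
            exact abs_le.mpr ⟨by linarith, by linarith⟩
      rcases hsum with h0 | ⟨hnrm, hbad⟩
      · rw [h0]; simp
      · have hxBad : x ∈ Bad := ⟨hbad, hx1δ⟩
        rw [hH, Set.indicator_of_mem hxBad, hnrm]
        rcases eq_or_lt_of_le (norm_nonneg x.1) with hz | hz
        · rw [← hz, ENNReal.ofReal_zero, ENNReal.zero_rpow_of_neg hpneg,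
            ENNReal.mul_top (by
              simp only [ne_eq, mul_eq_zero, not_or]
              exact ⟨two_ne_zero, by simpa [ENNReal.ofReal_eq_zero, not_le] using hΛ⟩)]
          exact le_top
        · have hKx := hKbd x
          have hmono : Real.sqrt (‖x.1‖ ^ 2 + x.2 ^ 2) ^ (-(((m : ℝ) + 1) + s))
              ≤ ‖x.1‖ ^ (-(((m : ℝ) + 1) + s)) :=
            Real.rpow_le_rpow_of_nonpos hz (hν x) hpneg.le
          calc ENNReal.ofReal (2 * K x) = 2 * ENNReal.ofReal (K x) := by
                rw [ENNReal.ofReal_mul (by norm_num : (0:ℝ) ≤ 2), ENNReal.ofReal_ofNat]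
            _ ≤ 2 * (ENNReal.ofReal Λ * ENNReal.ofReal ‖x.1‖ ^ (-(((m : ℝ) + 1) + s))) := by
                gcongr 2 * ?_
                calc ENNReal.ofReal (K x)
                    ≤ ENNReal.ofReal (Λ * ‖x.1‖ ^ (-(((m : ℝ) + 1) + s))) :=
                      ENNReal.ofReal_le_ofReal
                        (le_trans hKx (mul_le_mul_of_nonneg_left hmono hΛ.le))
                  _ = ENNReal.ofReal Λ * ENNReal.ofReal ‖x.1‖ ^ (-(((m : ℝ) + 1) + s)) := by
                      rw [ENNReal.ofReal_mul hΛ.le, ENNReal.ofReal_rpow_of_pos hz]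
            _ = 2 * ENNReal.ofReal Λ * ENNReal.ofReal ‖x.1‖ ^ (-(((m : ℝ) + 1) + s)) := by
                ring
    -- computing the integral of the majorant
    have hinner : ∀ x' : EuclideanSpace ℝ (Fin m), (∫⁻ t : ℝ, H (x', t)) =
        {y : EuclideanSpace ℝ (Fin m) | ‖y‖ < δ}.indicator
          (fun y => 2 * ENNReal.ofReal Λ * ENNReal.ofReal ‖y‖ ^ (-(((m : ℝ) + 1) + s)) *
            ENNReal.ofReal (2 * (a * ‖y‖ ^ 2))) x' := by
      intro x'
      by_cases hx'δ : ‖x'‖ < δ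
      · rw [Set.indicator_of_mem
          (show x' ∈ {y : EuclideanSpace ℝ (Fin m) | ‖y‖ < δ} from hx'δ)]
        have hfun : (fun t : ℝ => H (x', t)) =
            fun t => (Set.Icc (-(a * ‖x'‖ ^ 2)) (a * ‖x'‖ ^ 2)).indicator
              (fun _ => 2 * ENNReal.ofReal Λ
                * ENNReal.ofReal ‖x'‖ ^ (-(((m : ℝ) + 1) + s))) t := by
          funext t
          rw [hH]
          by_cases ht : |t| ≤ a * ‖x'‖ ^ 2
          · rw [Set.indicator_of_mem (show ((x', t) : _) ∈ Bad from ⟨ht, hx'δ⟩),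
              Set.indicator_of_mem (Set.mem_Icc.mpr (abs_le.mp ht))]
          · rw [Set.indicator_of_notMem (fun hc => ht hc.1),
              Set.indicator_of_notMem (fun hc => ht (abs_le.mpr (Set.mem_Icc.mp hc)))]
        rw [hfun, lintegral_indicator_const measurableSet_Icc, Real.volume_Icc,
          show a * ‖x'‖ ^ 2 - -(a * ‖x'‖ ^ 2) = 2 * (a * ‖x'‖ ^ 2) by ring]
      · rw [Set.indicator_of_notMem
          (show x' ∉ {y : EuclideanSpace ℝ (Fin m) | ‖y‖ < δ} from hx'δ)]
        have hzero : ∀ t : ℝ, H (x', t) = 0 := by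
          intro t
          rw [hH]
          exact Set.indicator_of_notMem (fun hc => hx'δ hc.2) _
        simp [hzero]
    have hred : ∀ y : EuclideanSpace ℝ (Fin m),
        2 * ENNReal.ofReal Λ * ENNReal.ofReal ‖y‖ ^ (-(((m : ℝ) + 1) + s)) *
          ENNReal.ofReal (2 * (a * ‖y‖ ^ 2))
        = 2 * ENNReal.ofReal Λ * ENNReal.ofReal (2 * a) *
            ENNReal.ofReal (‖y‖ ^ ((-(((m : ℝ) + 1) + s)) + 2)) := by
      intro y
      rcases eq_or_lt_of_le (norm_nonneg y) with hz | hz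
      · rw [← hz]
        rw [show ((-(((m : ℝ) + 1) + s)) + 2 : ℝ) = 1 - (m:ℝ) - s from hp2]
        simp [Real.zero_rpow hp2ne]
      · have hre : ‖y‖ ^ (-(((m : ℝ) + 1) + s)) * (2 * (a * ‖y‖ ^ 2))
            = (2 * a) * ‖y‖ ^ ((-(((m : ℝ) + 1) + s)) + 2) := by
          rw [Real.rpow_add hz, show ((2:ℝ)) = ((2:ℕ):ℝ) by norm_num, Real.rpow_natCast]
          push_cast
          ring
        calc 2 * ENNReal.ofReal Λ * ENNReal.ofReal ‖y‖ ^ (-(((m : ℝ) + 1) + s)) *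
              ENNReal.ofReal (2 * (a * ‖y‖ ^ 2))
            = 2 * ENNReal.ofReal Λ * (ENNReal.ofReal (‖y‖ ^ (-(((m : ℝ) + 1) + s))) *
                ENNReal.ofReal (2 * (a * ‖y‖ ^ 2))) := by
              rw [← ENNReal.ofReal_rpow_of_pos hz, mul_assoc]
          _ = 2 * ENNReal.ofReal Λ *
                ENNReal.ofReal ((2 * a) * ‖y‖ ^ ((-(((m : ℝ) + 1) + s)) + 2)) := by
              rw [← ENNReal.ofReal_mul (Real.rpow_nonneg (norm_nonneg y) _), hre]
          _ = _ := by
              rw [ENNReal.ofReal_mul (by positivity : (0:ℝ) ≤ 2 * a), ← mul_assoc]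
    have hT : ∫⁻ x' : EuclideanSpace ℝ (Fin m),
        {y : EuclideanSpace ℝ (Fin m) | ‖y‖ < δ}.indicator
          (fun y => ENNReal.ofReal (‖y‖ ^ ((-(((m : ℝ) + 1) + s)) + 2))) x'
        ≤ ENNReal.ofReal (δ ^ (1 - s)) * Gconst m s := by
      rw [show ((-(((m : ℝ) + 1) + s)) + 2 : ℝ) = 1 - (m:ℝ) - s from hp2]
      rcases Nat.eq_zero_or_pos m with hm0 | hm1
      · have hyz : ({y : EuclideanSpace ℝ (Fin m) | ‖y‖ < δ}.indicator
            (fun y => ENNReal.ofReal (‖y‖ ^ ((1:ℝ) - (m:ℝ) - s))) : _ → ℝ≥0∞)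
            = fun _ => 0 := by
          funext y
          have hy0 : ‖y‖ = 0 := by
            subst hm0
            rw [Subsingleton.elim y 0, norm_zero]
          by_cases hy : y ∈ {y : EuclideanSpace ℝ (Fin m) | ‖y‖ < δ}
          · rw [Set.indicator_of_mem hy, hy0, Real.zero_rpow hp2ne, ENNReal.ofReal_zero]
          · rw [Set.indicator_of_notMem hy]
        rw [hyz, lintegral_zero]
        exact zero_le
      · have h1m : (1:ℝ) ≤ m := by exact_mod_cast hm1
        have hd := dyadic_bound m (1 - (m:ℝ) - s) δ (by linarith) (by linarith) hδ0
        rw [show (m:ℝ) + (1 - (m:ℝ) - s) = 1 - s by ring] at hd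
        refine le_trans hd (le_of_eq ?_)
        rw [Gconst]
        ring
    have hlin : (∫⁻ x in A, ENNReal.ofReal ‖f x + f (-x)‖ ∂volume)
        ≤ 2 * ENNReal.ofReal Λ * ENNReal.ofReal (2 * a) *
            (ENNReal.ofReal (δ ^ (1 - s)) * Gconst m s) := by
      calc ∫⁻ x in A, ENNReal.ofReal ‖f x + f (-x)‖ ∂volume
          ≤ ∫⁻ x in A, H x ∂volume := setLIntegral_mono' hAmeas hpt
        _ ≤ ∫⁻ x, H x ∂volume := setLIntegral_le_lintegral _ _
        _ = ∫⁻ x' : EuclideanSpace ℝ (Fin m), ∫⁻ t : ℝ, H (x', t) := by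
            rw [Measure.volume_eq_prod, lintegral_prod _ hHmeas.aemeasurable]
        _ = ∫⁻ x' : EuclideanSpace ℝ (Fin m),
              {y : EuclideanSpace ℝ (Fin m) | ‖y‖ < δ}.indicator
                (fun y => 2 * ENNReal.ofReal Λ *
                  ENNReal.ofReal ‖y‖ ^ (-(((m : ℝ) + 1) + s)) *
                  ENNReal.ofReal (2 * (a * ‖y‖ ^ 2))) x' :=
            lintegral_congr hinner
        _ = ∫⁻ x' : EuclideanSpace ℝ (Fin m),
              2 * ENNReal.ofReal Λ * ENNReal.ofReal (2 * a) *
              ({y : EuclideanSpace ℝ (Fin m) | ‖y‖ < δ}.indicator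
                (fun y => ENNReal.ofReal (‖y‖ ^ ((-(((m : ℝ) + 1) + s)) + 2))) x') := by
            apply lintegral_congr
            intro x'
            rw [show ({y : EuclideanSpace ℝ (Fin m) | ‖y‖ < δ}.indicator
                (fun y => 2 * ENNReal.ofReal Λ *
                  ENNReal.ofReal ‖y‖ ^ (-(((m : ℝ) + 1) + s)) *
                  ENNReal.ofReal (2 * (a * ‖y‖ ^ 2))) x')
              = ({y : EuclideanSpace ℝ (Fin m) | ‖y‖ < δ}.indicator
                (fun y => 2 * ENNReal.ofReal Λ * ENNReal.ofReal (2 * a) *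
                  ENNReal.ofReal (‖y‖ ^ ((-(((m : ℝ) + 1) + s)) + 2))) x')
              from by rw [Set.indicator_congr (fun y _ => hred y)]]
            exact Set.indicator_const_mul _ _ _ x'
        _ = 2 * ENNReal.ofReal Λ * ENNReal.ofReal (2 * a) *
              ∫⁻ x' : EuclideanSpace ℝ (Fin m),
                {y : EuclideanSpace ℝ (Fin m) | ‖y‖ < δ}.indicator
                  (fun y => ENNReal.ofReal (‖y‖ ^ ((-(((m : ℝ) + 1) + s)) + 2))) x' := by
            rw [lintegral_const_mul _ (Measurable.indicator (by fun_prop)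
              (measurableSet_lt measurable_norm measurable_const))]
        _ ≤ _ := mul_le_mul_right hT _
    have hfin : (2 * ENNReal.ofReal Λ * ENNReal.ofReal (2 * a) *
        (ENNReal.ofReal (δ ^ (1 - s)) * Gconst m s)) ≠ ⊤ := by
      apply ENNReal.mul_ne_top
      · apply ENNReal.mul_ne_top
        · exact ENNReal.mul_ne_top (by simp) ENNReal.ofReal_ne_top
        · exact ENNReal.ofReal_ne_top
      · exact ENNReal.mul_ne_top ENNReal.ofReal_ne_top (Gconst_ne_top m hs1)
    calc |∫ x in A, f x| = (1/2) * |∫ x in A, (f x + f (-x))| := habs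
      _ ≤ (1/2) * (∫⁻ x in A, ENNReal.ofReal ‖f x + f (-x)‖ ∂volume).toReal :=
          mul_le_mul_of_nonneg_left hbound1 (by norm_num)
      _ ≤ (1/2) * (2 * ENNReal.ofReal Λ * ENNReal.ofReal (2 * a) *
            (ENNReal.ofReal (δ ^ (1 - s)) * Gconst m s)).toReal :=
          mul_le_mul_of_nonneg_left (ENNReal.toReal_mono hfin hlin) (by norm_num)
      _ = B := by
          rw [hB, hGt]
          simp only [ENNReal.toReal_mul, ENNReal.toReal_ofNat,
            ENNReal.toReal_ofReal hΛ.le,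
            ENNReal.toReal_ofReal (show (0:ℝ) ≤ 2 * a by positivity),
            ENNReal.toReal_ofReal (Real.rpow_nonneg hδ0.le _)]
          ring
  have hIB : |I| ≤ B := le_of_tendsto hI.abs ((eventually_mem_nhdsWithin).mono hkey)
  refine le_trans hIB ?_
  rw [hB, hGt]
  nlinarith [mul_nonneg (mul_nonneg hΛ.le ha.le) (Real.rpow_nonneg hδ0.le (1 - s)),
    mul_nonneg ha.le (Real.rpow_nonneg hδ0.le (1 - s)), hΛ.le, hGt0]
end
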